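/- arXiv:2108.04538 — 2 statements merged into one kernel-verified Lean document; each statement's English description precedes it below -/
import Mathlib

section
/- Assume d ≥ 2. For z ∈ ℂ with |z| = 1, let t_z = diag(z, z̄², 1, …, 1, z) ∈ SU(d,1). Then j̃(t_z, τ) = Log z for all τ ∈ ℋ, and consequently σ(t_z, t_{z'}) = (1/(2πi))(Log(zz') − Log z − Log z'). Moreover the map Ψ defined by Ψ(z,n) = (1/(2πi))Log z − n is a group isomorphism from the set {(z,n) : z ∈ ℂ, |z| = 1, n ∈ ℤ} with multiplication (z,n)·(z',n') = (zz', n + n' + σ(t_z,t_{z'})) onto the additive group of real numbers ℝ. -/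
open Matrix Complex
open scoped ComplexOrder

noncomputable section

/-- `SLC n` is the special linear group of `n × n` complex matrices. -/
abbrev SLC (n : ℕ) := Matrix.SpecialLinearGroup (Fin n) ℂ

/-- The standard Hermitian matrix of signature `(d,1)` used to define `SU(d,1)`:
`J_{1,d+1} = J_{d+1,1} = 1`, `J_{i,i} = 1` for `2 ≤ i ≤ d` (1-indexed), and `0` otherwise. -/
def Jmat (d : ℕ) : Matrix (Fin (d+1)) (Fin (d+1)) ℂ :=
  Matrix.of fun i j =>
    if (i = 0 ∧ j = Fin.last d) ∨ (i = Fin.last d ∧ j = 0) then 1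
    else if i = j ∧ i ≠ 0 ∧ i ≠ Fin.last d then 1 else 0

/-- `SU(d,1)`, realised as the subgroup of `SL_{d+1}(ℂ)` preserving the Hermitian
form given by `Jmat d`. -/
def SUd1 (d : ℕ) : Subgroup (SLC (d+1)) where
  carrier := {g | (↑g : Matrix (Fin (d+1)) (Fin (d+1)) ℂ)ᴴ * Jmat d * ↑g = Jmat d}
  one_mem' := by simp
  mul_mem' := by
    intro a b ha hb
    simp only [Set.mem_setOf_eq] at ha hb ⊢
    rw [Matrix.SpecialLinearGroup.coe_mul, Matrix.conjTranspose_mul]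
    calc (↑b)ᴴ * (↑a)ᴴ * Jmat d * ((↑a : Matrix (Fin (d+1)) (Fin (d+1)) ℂ) * ↑b)
        = (↑b)ᴴ * ((↑a : Matrix (Fin (d+1)) (Fin (d+1)) ℂ)ᴴ * Jmat d * ↑a) * ↑b := by
          simp only [Matrix.mul_assoc]
      _ = Jmat d := by rw [ha]; exact hb
  inv_mem' := by
    intro a ha
    simp only [Set.mem_setOf_eq] at ha ⊢
    set A : Matrix (Fin (d+1)) (Fin (d+1)) ℂ := ↑a with hA
    set B : Matrix (Fin (d+1)) (Fin (d+1)) ℂ := ↑(a⁻¹) with hB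
    have h1 : A * B = 1 := by
      rw [hA, hB, ← Matrix.SpecialLinearGroup.coe_mul, mul_inv_cancel]
      simp
    calc Bᴴ * Jmat d * B
        = Bᴴ * (Aᴴ * Jmat d * A) * B := by rw [ha]
      _ = (A * B)ᴴ * Jmat d * (A * B) := by
          rw [Matrix.conjTranspose_mul]; simp only [Matrix.mul_assoc]
      _ = Jmat d := by rw [h1]; simp

/-- The Hermitian form `⟨v,w⟩ = conj(v)ᵀ J w` on `ℂ^{d+1}`. -/
def Hform (d : ℕ) (v w : Fin (d+1) → ℂ) : ℂ := star v ⬝ᵥ (Jmat d *ᵥ w)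

/-- The symmetric space `ℋ = {τ ∈ ℂ^d : ⟨(τ;1),(τ;1)⟩ < 0}`. -/
def Hdom (d : ℕ) : Set (Fin d → ℂ) :=
  {τ | Hform d (Fin.snoc τ 1) (Fin.snoc τ 1) < 0}

/-- The automorphy factor `j(g,τ) = Cτ + D`. -/
def jfun (d : ℕ) (g : Matrix (Fin (d+1)) (Fin (d+1)) ℂ) (τ : Fin d → ℂ) : ℂ :=
  (g *ᵥ Fin.snoc τ 1) (Fin.last d)

/-- The action `g*τ = (Cτ+D)⁻¹ (Aτ+B)` of `SU(d,1)` on `ℋ`. -/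
def actH (d : ℕ) (g : Matrix (Fin (d+1)) (Fin (d+1)) ℂ) (τ : Fin d → ℂ) : Fin d → ℂ :=
  fun k => (g *ᵥ Fin.snoc τ 1) (Fin.castSucc k) / jfun d g τ

open scoped Classical in
/-- `X(g) = -g_{d+1,1}` if `g_{d+1,1} ≠ 0`, and `g_{d+1,d+1}` otherwise. -/
def Xfun (d : ℕ) (g : Matrix (Fin (d+1)) (Fin (d+1)) ℂ) : ℂ :=
  if g (Fin.last d) 0 = 0 then g (Fin.last d) (Fin.last d) else -(g (Fin.last d) 0)

/-- The branch `j̃(g,τ) = Log(j(g,τ)/X(g)) + Log(X(g))` of the logarithm of `j(g,τ)`,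
where `Log` is the principal branch (imaginary part in `(-π, π]`). -/
def jtilde (d : ℕ) (g : Matrix (Fin (d+1)) (Fin (d+1)) ℂ) (τ : Fin d → ℂ) : ℂ :=
  Complex.log (jfun d g τ / Xfun d g) + Complex.log (Xfun d g)

/-- A base point of `ℋ` (for `d ≥ 1`). -/
def baseTau (d : ℕ) : Fin d → ℂ := fun i => if (i : ℕ) = 0 then -1 else 0

/-- The 2-cocycle `σ(g,h) = (1/(2πi))(j̃(gh,τ) − j̃(g,h*τ) − j̃(h,τ))`, evaluated at the
base point of `ℋ` (as proved in the paper, the value is an integer and does not depend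
on the choice of `τ ∈ ℋ`). -/
def sigmaC (d : ℕ) (g h : Matrix (Fin (d+1)) (Fin (d+1)) ℂ) : ℂ :=
  (jtilde d (g * h) (baseTau d) - jtilde d g (actH d h (baseTau d)) - jtilde d h (baseTau d)) /
    (2 * Real.pi * Complex.I)

/-- The integer-valued 2-cocycle `σ` on `SU(d,1)` classifying its universal cover. -/
def sigmaZ (d : ℕ) (g h : Matrix (Fin (d+1)) (Fin (d+1)) ℂ) : ℤ := round (sigmaC d g h).re

/-- The diagonal torus element `t_z = diag(z, z̄², 1, …, 1, z)` of `SU(d,1)`. -/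
def tzmat (d : ℕ) (z : ℂ) : Matrix (Fin (d+1)) (Fin (d+1)) ℂ :=
  Matrix.diagonal fun i =>
    if i = 0 then z
    else if (i : ℕ) = 1 then (starRingEnd ℂ z) ^ 2
    else if i = Fin.last d then z else 1

/-- The map `Ψ(z,n) = (1/(2πi)) Log z − n` from the `σ`-twisted product
`{z : |z|=1} × ℤ` to `ℝ`. -/
def PsiMap (p : {w : ℂ // ‖w‖ = 1} × ℤ) : ℝ :=
  (Complex.log ↑p.1 / (2 * Real.pi * Complex.I)).re - p.2

/-! ### Auxiliary lemmas -/

lemma log_unit {z : ℂ} (hz : ‖z‖ = 1) :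
    Complex.log z = (z.arg : ℂ) * Complex.I := by
  apply Complex.ext <;> simp [Complex.log_re, Complex.log_im, hz]

lemma last_ne_zero' {d : ℕ} (hd : 2 ≤ d) : (Fin.last d : Fin (d+1)) ≠ 0 := by
  simp [Fin.ext_iff]; omega

lemma tz_fun_last {d : ℕ} (hd : 2 ≤ d) (z : ℂ) :
    (fun i : Fin (d+1) =>
      if i = 0 then z
      else if (i : ℕ) = 1 then (starRingEnd ℂ z) ^ 2
      else if i = Fin.last d then z else 1) (Fin.last d) = z := by
  have h0 := last_ne_zero' hd
  have h1 : d ≠ 1 := by omega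
  simp [h0, Fin.val_last, h1]

lemma tz_mul (d : ℕ) (z z' : ℂ) : tzmat d z * tzmat d z' = tzmat d (z * z') := by
  unfold tzmat
  rw [Matrix.diagonal_mul_diagonal]
  refine congrArg Matrix.diagonal (funext fun i => ?_)
  by_cases h0 : i = 0
  · simp [h0]
  · by_cases h1 : (i : ℕ) = 1
    · simp [h0, h1, mul_pow]
    · by_cases h2 : i = Fin.last d <;> simp [h0, h1, h2] <;> split_ifs <;> ring

lemma exists_k {z z' : ℂ} (hz : z ≠ 0) (hz' : z' ≠ 0) :
    ∃ k : ℤ, (z * z').arg - (z.arg + z'.arg) = 2 * Real.pi * k := by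
  have := Complex.arg_mul_coe_angle hz hz'
  rw [← Real.Angle.coe_add] at this
  exact Real.Angle.angle_eq_iff_two_pi_dvd_sub.mp this

lemma jfun_tz {d : ℕ} (hd : 2 ≤ d) (z : ℂ) (τ : Fin d → ℂ) :
    jfun d (tzmat d z) τ = z := by
  unfold jfun tzmat
  rw [Matrix.mulVec_diagonal, Fin.snoc_last, mul_one]
  exact tz_fun_last hd z

lemma Xfun_tz {d : ℕ} (hd : 2 ≤ d) (z : ℂ) : Xfun d (tzmat d z) = z := by
  have hc : tzmat d z (Fin.last d) 0 = 0 := by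
    unfold tzmat
    exact Matrix.diagonal_apply_ne _ (last_ne_zero' hd)
  unfold Xfun
  rw [if_pos hc]
  unfold tzmat
  rw [Matrix.diagonal_apply_eq]
  exact tz_fun_last hd z

lemma jtilde_tz {d : ℕ} (hd : 2 ≤ d) {z : ℂ} (hz : z ≠ 0) (τ : Fin d → ℂ) :
    jtilde d (tzmat d z) τ = Complex.log z := by
  unfold jtilde
  rw [jfun_tz hd, Xfun_tz hd, div_self hz, Complex.log_one, zero_add]

lemma two_pi_I_ne_zero : (2 * (Real.pi : ℂ) * Complex.I) ≠ 0 := by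
  simp [Real.pi_ne_zero, Complex.I_ne_zero]

lemma log_diff_eq {z z' : ℂ} (hz : ‖z‖ = 1) (hz' : ‖z'‖ = 1)
    {k : ℤ} (hk : (z * z').arg - (z.arg + z'.arg) = 2 * Real.pi * k) :
    Complex.log (z * z') - Complex.log z - Complex.log z'
      = 2 * (Real.pi : ℂ) * k * Complex.I := by
  have hzz : ‖z * z'‖ = 1 := by rw [norm_mul, hz, hz', mul_one]
  rw [log_unit hzz, log_unit hz, log_unit hz']
  have h1 : ((z * z').arg : ℂ) - (z.arg : ℂ) - (z'.arg : ℂ) = 2 * (Real.pi : ℂ) * k := by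
    have h2 : ((z * z').arg - (z.arg + z'.arg) : ℝ) = (2 * Real.pi * (k : ℝ)) := by
      rw [hk]
    calc ((z * z').arg : ℂ) - (z.arg : ℂ) - (z'.arg : ℂ)
        = (((z * z').arg - (z.arg + z'.arg) : ℝ) : ℂ) := by push_cast; ring
      _ = ((2 * Real.pi * (k : ℝ) : ℝ) : ℂ) := by rw [h2]
      _ = 2 * (Real.pi : ℂ) * k := by push_cast; ring
  calc ((z * z').arg : ℂ) * Complex.I - (z.arg : ℂ) * Complex.I - (z'.arg : ℂ) * Complex.I
      = (((z * z').arg : ℂ) - (z.arg : ℂ) - (z'.arg : ℂ)) * Complex.I := by ring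
    _ = 2 * (Real.pi : ℂ) * k * Complex.I := by rw [h1]

lemma sigma_key {d : ℕ} (hd : 2 ≤ d) {z z' : ℂ}
    (hz : ‖z‖ = 1) (hz' : ‖z'‖ = 1) :
    ∃ k : ℤ, (z * z').arg - (z.arg + z'.arg) = 2 * Real.pi * k ∧
      sigmaC d (tzmat d z) (tzmat d z') = (k : ℂ) ∧
      sigmaZ d (tzmat d z) (tzmat d z') = k := by
  have hz0 : z ≠ 0 := by intro h; rw [h] at hz; simp at hz
  have hz0' : z' ≠ 0 := by intro h; rw [h] at hz'; simp at hz'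
  have hzz0 : z * z' ≠ 0 := mul_ne_zero hz0 hz0'
  obtain ⟨k, hk⟩ := exists_k hz0 hz0'
  have hC : sigmaC d (tzmat d z) (tzmat d z') = (k : ℂ) := by
    unfold sigmaC
    rw [tz_mul, jtilde_tz hd hzz0, jtilde_tz hd hz0, jtilde_tz hd hz0']
    rw [show Complex.log (z * z') - Complex.log z - Complex.log z'
        = 2 * (Real.pi : ℂ) * k * Complex.I from log_diff_eq hz hz' hk]
    rw [mul_comm (2 * (Real.pi : ℂ) * (k : ℂ)) Complex.I]
    rw [show (2 : ℂ) * Real.pi * Complex.I = Complex.I * (2 * Real.pi) by ring]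
    rw [mul_div_mul_left _ _ Complex.I_ne_zero]
    have h2pi : ((2 : ℂ) * Real.pi) ≠ 0 := by
      simp [Real.pi_ne_zero]
    field_simp
  have hZ : sigmaZ d (tzmat d z) (tzmat d z') = k := by
    unfold sigmaZ
    rw [hC]
    simp
  exact ⟨k, hk, hC, hZ⟩

lemma psi_eq (w : {w : ℂ // ‖w‖ = 1}) (n : ℤ) :
    PsiMap (w, n) = (w : ℂ).arg / (2 * Real.pi) - n := by
  unfold PsiMap
  congr 1
  have h1 : Complex.log (w : ℂ) / (2 * Real.pi * Complex.I)
      = (((w : ℂ).arg / (2 * Real.pi) : ℝ) : ℂ) := by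
    rw [log_unit w.2]
    rw [show (2 : ℂ) * Real.pi * Complex.I = Complex.I * (2 * Real.pi) by ring]
    rw [show ((w : ℂ).arg : ℂ) * Complex.I = Complex.I * ((w : ℂ).arg : ℂ) by ring]
    rw [mul_div_mul_left _ _ Complex.I_ne_zero]
    push_cast
    ring
  rw [h1, Complex.ofReal_re]

/-- For `|z| = 1`, `j̃(t_z,τ) = Log z` for every `τ ∈ ℋ`, hence
`σ(t_z,t_{z'}) = (1/(2πi))(Log(zz') − Log z − Log z')`; and `Ψ(z,n) = (1/(2πi))Log z − n`
is a group isomorphism (a multiplicative bijection) from `{(z,n) : |z| = 1, n ∈ ℤ}` with the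
`σ`-twisted multiplication onto the additive group `ℝ`. -/
theorem statement7 (d : ℕ) (hd : 2 ≤ d) :
    (∀ z : ℂ, ‖z‖ = 1 → ∀ τ ∈ Hdom d, jtilde d (tzmat d z) τ = Complex.log z) ∧
    (∀ z z' : ℂ, ‖z‖ = 1 → ‖z'‖ = 1 →
      (sigmaZ d (tzmat d z) (tzmat d z') : ℂ)
        = (Complex.log (z * z') - Complex.log z - Complex.log z')
            / (2 * Real.pi * Complex.I)) ∧
    (∀ (z z' : {w : ℂ // ‖w‖ = 1}) (n n' : ℤ),
      PsiMap (⟨↑z * ↑z', by rw [norm_mul, z.2, z'.2, mul_one]⟩,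
          n + n' + sigmaZ d (tzmat d ↑z) (tzmat d ↑z'))
        = PsiMap (z, n) + PsiMap (z', n')) ∧
    Function.Bijective PsiMap := by
  have hπ : (0 : ℝ) < Real.pi := Real.pi_pos
  refine ⟨?_, ?_, ?_, ?_, ?_⟩
  · intro z hz τ _
    exact jtilde_tz hd (by intro h; rw [h] at hz; simp at hz) τ
  · intro z z' hz hz'
    obtain ⟨k, hk, hC, hZ⟩ := sigma_key hd hz hz'
    rw [hZ]
    rw [show Complex.log (z * z') - Complex.log z - Complex.log z'
        = 2 * (Real.pi : ℂ) * k * Complex.I from log_diff_eq hz hz' hk]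
    rw [mul_comm (2 * (Real.pi : ℂ) * (k : ℂ)) Complex.I]
    rw [show (2 : ℂ) * Real.pi * Complex.I = Complex.I * (2 * Real.pi) by ring]
    rw [mul_div_mul_left _ _ Complex.I_ne_zero]
    have h2pi : ((2 : ℂ) * Real.pi) ≠ 0 := by simp [Real.pi_ne_zero]
    field_simp
  · intro z z' n n'
    obtain ⟨k, hk, hC, hZ⟩ := sigma_key hd z.2 z'.2
    rw [psi_eq, psi_eq, psi_eq, hZ]
    have harg : ((z : ℂ) * (z' : ℂ)).arg = (z : ℂ).arg + (z' : ℂ).arg + 2 * Real.pi * k := by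
      linarith
    push_cast
    rw [harg]
    have h2 : (2 * Real.pi : ℝ) ≠ 0 := by positivity
    field_simp
    ring
  · rintro ⟨w, n⟩ ⟨w', n'⟩ h
    rw [psi_eq, psi_eq] at h
    have hb : |(w : ℂ).arg / (2 * Real.pi) - (w' : ℂ).arg / (2 * Real.pi)| < 1 := by
      rw [abs_lt]
      constructor
      · rw [div_sub_div_same, neg_lt, ← neg_div, neg_sub]
        rw [div_lt_one (by positivity)]
        linarith [Complex.arg_le_pi (w' : ℂ), Complex.neg_pi_lt_arg (w : ℂ)]
      · rw [div_sub_div_same, div_lt_one (by positivity)]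
        linarith [Complex.arg_le_pi (w : ℂ), Complex.neg_pi_lt_arg (w' : ℂ)]
    have hn : ((n - n' : ℤ) : ℝ) = (w : ℂ).arg / (2 * Real.pi) - (w' : ℂ).arg / (2 * Real.pi) := by
      push_cast
      linarith
    have hnn : n = n' := by
      have : |((n - n' : ℤ) : ℝ)| < 1 := by rw [hn]; exact hb
      have h1 : |n - n'| < 1 := by exact_mod_cast this
      rw [abs_lt] at h1
      omega
    subst hnn
    have harg : (w : ℂ).arg = (w' : ℂ).arg := by
      have : (w : ℂ).arg / (2 * Real.pi) = (w' : ℂ).arg / (2 * Real.pi) := by linarith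
      have h2 : (2 * Real.pi : ℝ) ≠ 0 := by positivity
      field_simp at this
      linarith
    have hw : (w : ℂ) = (w' : ℂ) := by
      have e1 := Complex.norm_mul_cos_add_sin_mul_I (w : ℂ)
      have e2 := Complex.norm_mul_cos_add_sin_mul_I (w' : ℂ)
      rw [w.2] at e1
      rw [w'.2] at e2
      rw [← e1, ← e2, harg]
    exact Prod.ext (Subtype.ext hw) rfl
  · intro r
    set n : ℤ := ⌈r - 1/2⌉ with hn
    have hub : r - n ≤ 1/2 := by
      have := Int.le_ceil (r - 1/2)
      rw [← hn] at this
      linarith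
    have hlb : -(1/2 : ℝ) < r - n := by
      have := Int.ceil_lt_add_one (r - 1/2)
      rw [← hn] at this
      linarith
    set θ : ℝ := 2 * Real.pi * (r - n) with hθ
    have hθmem : θ ∈ Set.Ioc (-Real.pi) Real.pi := by
      constructor
      · rw [hθ]; nlinarith
      · rw [hθ]; nlinarith
    set w : ℂ := Complex.cos θ + Complex.sin θ * Complex.I with hw
    have habs : ‖w‖ = 1 := by
      rw [hw]; exact Complex.norm_cos_add_sin_mul_I θ
    have harg : w.arg = θ := by
      rw [hw]; exact Complex.arg_cos_add_sin_mul_I hθmem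
    refine ⟨(⟨w, habs⟩, -n), ?_⟩
    rw [psi_eq]
    simp only [harg]
    rw [hθ]
    have h2 : (2 * Real.pi : ℝ) ≠ 0 := by positivity
    push_cast
    field_simp
    ring

end
end

section
/- Let Γ be a subgroup of SU(d,1) and n a positive integer. There exists a multiplier system of weight 1/n on Γ if and only if the restriction of σ to Γ splits modulo n, i.e. if and only if there exists a function κ : Γ → ℚ such that σ(g,h) − (κ(gh) − κ(g) − κ(h)) ∈ nℤ for all g,h ∈ Γ. -/
open Matrix Complex
open scoped ComplexOrder

noncomputable section

/-- A fractional-weight multiplier system of weight `n'/m` on a subgroup (given by its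
underlying set `S`) of `SU(d,1)`: a nowhere-vanishing function `ℓ` on `S × ℋ` satisfying
the multiplier identity, whose `m`-th power is a character times `j(g,τ)^{n'}`, and which
is continuous (hence holomorphic) in `τ` on `ℋ`. -/
def IsMultiplierSystem (d : ℕ) (S : Set (SLC (d+1))) (n' m : ℕ)
    (ℓ : SLC (d+1) → (Fin d → ℂ) → ℂ) : Prop :=
  (∀ g ∈ S, ∀ τ ∈ Hdom d, ℓ g τ ≠ 0) ∧
  (∀ g ∈ S, ∀ h ∈ S, ∀ τ ∈ Hdom d,
    ℓ (g * h) τ = ℓ g (actH d (↑h) τ) * ℓ h τ) ∧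
  (∃ χ : SLC (d+1) → ℂ, (∀ g ∈ S, ∀ h ∈ S, χ (g * h) = χ g * χ h) ∧
      ∀ g ∈ S, ∀ τ ∈ Hdom d, ℓ g τ ^ m = χ g * jfun d (↑g) τ ^ n') ∧
  (∀ g ∈ S, ContinuousOn (ℓ g) (Hdom d))
section AuxFin

open Fin Finset

variable {d : ℕ}

lemma zero_ne_last (hd : 1 ≤ d) : (0 : Fin (d+1)) ≠ Fin.last d := by
  intro h
  have := congrArg Fin.val h
  simp [Fin.val_last] at this
  omega

lemma castSucc_ne_last' (k : Fin d) : Fin.castSucc k ≠ Fin.last d :=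
  (Fin.castSucc_lt_last k).ne

lemma Jmat_cc [NeZero d] (k k' : Fin d) :
    Jmat d (Fin.castSucc k) (Fin.castSucc k') = if k = k' ∧ k ≠ 0 then 1 else 0 := by
  simp only [Jmat, Matrix.of_apply, castSucc_ne_last' k, castSucc_ne_last' k',
    Fin.castSucc_inj, Fin.castSucc_eq_zero_iff, and_false, false_and, false_or, or_false,
    and_true, true_and, if_false, ne_eq, not_false_eq_true]

lemma Jmat_cl (hd : 1 ≤ d) [NeZero d] (k : Fin d) :
    Jmat d (Fin.castSucc k) (Fin.last d) = if k = 0 then 1 else 0 := by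
  simp only [Jmat, Matrix.of_apply, castSucc_ne_last' k, (zero_ne_last hd).symm,
    Fin.castSucc_eq_zero_iff, and_false, false_and, false_or, or_false,
    and_true, true_and, if_false, ne_eq, not_false_eq_true]

lemma Jmat_lc (hd : 1 ≤ d) [NeZero d] (k : Fin d) :
    Jmat d (Fin.last d) (Fin.castSucc k) = if k = 0 then 1 else 0 := by
  simp only [Jmat, Matrix.of_apply, (castSucc_ne_last' k).symm, (zero_ne_last hd).symm,
    Fin.castSucc_eq_zero_iff, and_false, false_and, false_or, or_false,
    and_true, true_and, if_false, ne_eq, Ne.symm (zero_ne_last hd)]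

lemma Jmat_ll (hd : 1 ≤ d) : Jmat d (Fin.last d) (Fin.last d) = 0 := by
  simp only [Jmat, Matrix.of_apply, Ne.symm (zero_ne_last hd),
    and_false, false_and, false_or, or_false, and_true, true_and, if_false, ne_eq,
    or_self, not_true, if_true, eq_self_iff_true]

end AuxFin
section AuxForm

open Fin Finset

variable {d : ℕ}

lemma Jmat_mulVec_castSucc (hd : 1 ≤ d) [NeZero d] (v : Fin (d+1) → ℂ) (k : Fin d) :
    (Jmat d *ᵥ v) (Fin.castSucc k) = if k = 0 then v (Fin.last d) else v (Fin.castSucc k) := by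
  show (fun j => Jmat d (Fin.castSucc k) j) ⬝ᵥ v = _
  rw [dotProduct]
  rw [Fin.sum_univ_castSucc (f := fun j => Jmat d (Fin.castSucc k) j * v j)]
  simp only [Jmat_cc, Jmat_cl hd]
  by_cases hk : k = 0
  · subst hk
    simp
  · simp only [ne_eq, hk, if_false, not_false_eq_true, and_true, ite_mul, one_mul, zero_mul]
    rw [Finset.sum_ite_eq Finset.univ k (fun k' => v (Fin.castSucc k'))]
    simp

lemma Jmat_mulVec_last (hd : 1 ≤ d) [NeZero d] (v : Fin (d+1) → ℂ) :
    (Jmat d *ᵥ v) (Fin.last d) = v 0 := by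
  show (fun j => Jmat d (Fin.last d) j) ⬝ᵥ v = _
  rw [dotProduct]
  rw [Fin.sum_univ_castSucc (f := fun j => Jmat d (Fin.last d) j * v j)]
  simp only [Jmat_lc hd, Jmat_ll hd, zero_mul, add_zero, ite_mul, one_mul]
  rw [Finset.sum_ite_eq' Finset.univ (0 : Fin d) (fun k' => v (Fin.castSucc k'))]
  simp

/-- Expansion of the Hermitian form paired against itself. -/
lemma Hform_self (hd : 1 ≤ d) [NeZero d] (v : Fin (d+1) → ℂ) :
    Hform d v v = (starRingEnd ℂ) (v 0) * v (Fin.last d)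
      + (starRingEnd ℂ) (v (Fin.last d)) * v 0
      + ∑ k ∈ Finset.univ.erase (0 : Fin d), ((Complex.normSq (v (Fin.castSucc k)) : ℂ)) := by
  show star v ⬝ᵥ (Jmat d *ᵥ v) = _
  rw [dotProduct]
  rw [Fin.sum_univ_castSucc (f := fun i => star v i * (Jmat d *ᵥ v) i)]
  have h1 : ∀ k : Fin d, star v (Fin.castSucc k) * (Jmat d *ᵥ v) (Fin.castSucc k)
      = if k = 0 then (starRingEnd ℂ) (v 0) * v (Fin.last d)
        else (Complex.normSq (v (Fin.castSucc k)) : ℂ) := by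
    intro k
    rw [Jmat_mulVec_castSucc hd]
    by_cases hk : k = 0
    · subst hk
      simp [Pi.star_apply, Fin.castSucc_zero, Complex.star_def]
    · simp only [hk, if_false, Pi.star_apply, Complex.star_def]
      rw [mul_comm, Complex.mul_conj]
  rw [Finset.sum_congr rfl (fun k _ => h1 k)]
  rw [← Finset.add_sum_erase Finset.univ _ (Finset.mem_univ (0 : Fin d))]
  have h2 : ∑ k ∈ Finset.univ.erase (0 : Fin d),
      (if k = 0 then (starRingEnd ℂ) (v 0) * v (Fin.last d)
        else (Complex.normSq (v (Fin.castSucc k)) : ℂ))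
      = ∑ k ∈ Finset.univ.erase (0 : Fin d), ((Complex.normSq (v (Fin.castSucc k)) : ℂ)) := by
    refine Finset.sum_congr rfl (fun k hk => ?_)
    rw [if_neg (Finset.ne_of_mem_erase hk)]
  rw [h2, Jmat_mulVec_last hd]
  simp only [if_true, ite_true, Pi.star_apply, Complex.star_def]
  ring

/-- The real defining function of the domain. -/
def hval (d : ℕ) [NeZero d] (τ : Fin d → ℂ) : ℝ :=
  2 * (τ 0).re + ∑ k ∈ Finset.univ.erase (0 : Fin d), Complex.normSq (τ k)

lemma Hform_snoc (hd : 1 ≤ d) [NeZero d] (τ : Fin d → ℂ) :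
    Hform d (Fin.snoc τ 1) (Fin.snoc τ 1) = (hval d τ : ℂ) := by
  rw [Hform_self hd]
  have hz : (0 : Fin (d+1)) = Fin.castSucc (0 : Fin d) := by
    ext
    simp
  have h0 : (Fin.snoc τ 1 : Fin (d+1) → ℂ) 0 = τ 0 := by
    rw [hz, Fin.snoc_castSucc]
  simp only [h0, Fin.snoc_last, Fin.snoc_castSucc, hval]
  rw [RingHom.map_one, mul_one, one_mul]
  have hc : (starRingEnd ℂ) (τ 0) + τ 0 = ((2 * (τ 0).re : ℝ) : ℂ) := by
    rw [add_comm, Complex.add_conj]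
  rw [hc]
  push_cast
  ring

lemma mem_Hdom_iff (hd : 1 ≤ d) [NeZero d] (τ : Fin d → ℂ) :
    τ ∈ Hdom d ↔ hval d τ < 0 := by
  unfold Hdom
  rw [Set.mem_setOf_eq, Hform_snoc hd]
  constructor
  · intro h
    exact_mod_cast (Complex.real_lt_real (x := hval d τ) (y := 0)).mp (by exact_mod_cast h)
  · intro h
    exact_mod_cast (Complex.real_lt_real (x := hval d τ) (y := 0)).mpr h

lemma baseTau_mem (hd : 1 ≤ d) [NeZero d] : baseTau d ∈ Hdom d := by
  rw [mem_Hdom_iff hd]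
  unfold hval baseTau
  have h0 : ∑ k ∈ Finset.univ.erase (0 : Fin d),
      Complex.normSq (if ((k : Fin d) : ℕ) = 0 then (-1 : ℂ) else 0) = 0 := by
    refine Finset.sum_eq_zero (fun k hk => ?_)
    have : ((k : Fin d) : ℕ) ≠ 0 := by
      intro hc
      exact Finset.ne_of_mem_erase hk (Fin.ext hc)
    simp [this]
  rw [h0]
  norm_num

end AuxForm
section AuxConv

open Fin Finset

variable {d : ℕ}

lemma normSq_convex (a b : ℝ) (z w : ℂ) (ha : 0 ≤ a) (hb : 0 ≤ b) (hab : a + b = 1) :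
    Complex.normSq (a • z + b • w) ≤ a * Complex.normSq z + b * Complex.normSq w := by
  simp only [Complex.real_smul, Complex.normSq_apply, Complex.add_re, Complex.add_im,
    Complex.mul_re, Complex.mul_im, Complex.ofReal_re, Complex.ofReal_im]
  nlinarith [sq_nonneg (z.re - w.re), sq_nonneg (z.im - w.im), mul_nonneg ha hb]

lemma convex_Hdom (hd : 1 ≤ d) [NeZero d] : Convex ℝ (Hdom d) := by
  intro τ hτ τ' hτ' a b ha hb hab
  rw [mem_Hdom_iff hd] at hτ hτ' ⊢
  unfold hval at hτ hτ' ⊢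
  have hre : ((a • τ + b • τ') 0).re = a * (τ 0).re + b * (τ' 0).re := by
    simp [Complex.real_smul, Complex.add_re, Complex.mul_re]
  have hsum : ∑ k ∈ Finset.univ.erase (0 : Fin d), Complex.normSq ((a • τ + b • τ') k)
      ≤ a * (∑ k ∈ Finset.univ.erase (0 : Fin d), Complex.normSq (τ k))
      + b * (∑ k ∈ Finset.univ.erase (0 : Fin d), Complex.normSq (τ' k)) := by
    rw [Finset.mul_sum, Finset.mul_sum, ← Finset.sum_add_distrib]
    refine Finset.sum_le_sum (fun k _ => ?_)
    exact normSq_convex a b (τ k) (τ' k) ha hb hab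
  have hcomb : a * (2 * (τ 0).re + ∑ k ∈ Finset.univ.erase (0 : Fin d), Complex.normSq (τ k))
      + b * (2 * (τ' 0).re + ∑ k ∈ Finset.univ.erase (0 : Fin d), Complex.normSq (τ' k)) < 0 := by
    rcases lt_or_eq_of_le ha with hpos | h0
    · have h1 := mul_neg_of_pos_of_neg hpos hτ
      have h2 := mul_nonpos_of_nonneg_of_nonpos hb hτ'.le
      linarith
    · have hb1 : b = 1 := by linarith
      rw [← h0, hb1]
      simpa using hτ'
  rw [hre]
  linarith [hsum, hcomb]

lemma preconnected_Hdom (hd : 1 ≤ d) [NeZero d] : IsPreconnected (Hdom d) :=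
  (convex_Hdom hd).isPreconnected

/-- A preconnected subset of `ℝ` contained in `2πℤ` is a subsingleton. -/
lemma preconnected_twoPiInt_subsingleton {s : Set ℝ} (hs : IsPreconnected s)
    (h : ∀ x ∈ s, ∃ m : ℤ, x = 2 * Real.pi * m) : ∀ x ∈ s, ∀ y ∈ s, x = y := by
  have key : ∀ x ∈ s, ∀ y ∈ s, x < y → False := by
    intro x hx y hy hxy
    obtain ⟨m, hm⟩ := h x hx
    obtain ⟨m', hm'⟩ := h y hy
    have hmm : m < m' := by
      by_contra hc
      push_neg at hc
      have : (m' : ℝ) ≤ m := by exact_mod_cast hc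
      nlinarith [Real.pi_pos]
    have hmem : x + Real.pi ∈ Set.Icc x y := by
      constructor
      · nlinarith [Real.pi_pos]
      · have : (m : ℝ) + 1 ≤ m' := by exact_mod_cast hmm
        nlinarith [Real.pi_pos]
    have hxs : x + Real.pi ∈ s := hs.ordConnected.out hx hy hmem
    obtain ⟨k, hk⟩ := h _ hxs
    rw [hm] at hk
    have : (2 * m + 1 : ℝ) = 2 * k := by
      have hpi : Real.pi * (2 * m + 1) = Real.pi * (2 * k) := by linarith
      exact mul_left_cancel₀ Real.pi_ne_zero hpi
    have : (2 * m + 1 : ℤ) = 2 * k := by exact_mod_cast this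
    omega
  intro x hx y hy
  rcases lt_trichotomy x y with hlt | heq | hgt
  · exact absurd (key x hx y hy hlt) (fun h => h)
  · exact heq
  · exact absurd (key y hy x hx hgt) (fun h => h)

/-- A preconnected subset of `ℝ` contained in a finite set is a subsingleton. -/
lemma preconnected_finite_subsingleton {s T : Set ℝ} (hs : IsPreconnected s)
    (hT : T.Finite) (hsT : s ⊆ T) : ∀ x ∈ s, ∀ y ∈ s, x = y := by
  intro x hx y hy
  by_contra hne
  have key : ∀ a b : ℝ, a ∈ s → b ∈ s → a < b → False := by
    intro a b ha hb hab
    have : Set.Icc a b ⊆ s := hs.ordConnected.out ha hb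
    exact (Set.Icc_infinite hab) (hT.subset (this.trans hsT))
  rcases lt_trichotomy x y with hlt | heq | hgt
  · exact key x y hx hy hlt
  · exact hne heq
  · exact key y x hy hx hgt

end AuxConv
section AuxMat

open Fin Finset

variable {d : ℕ}

lemma zero_eq_castSucc_zero [NeZero d] : (0 : Fin (d+1)) = Fin.castSucc (0 : Fin d) := by
  ext
  simp

lemma Jmat_symm (a b : Fin (d+1)) : Jmat d a b = Jmat d b a := by
  simp only [Jmat, Matrix.of_apply]
  have h1 : ((a = 0 ∧ b = Fin.last d) ∨ (a = Fin.last d ∧ b = 0))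
      ↔ ((b = 0 ∧ a = Fin.last d) ∨ (b = Fin.last d ∧ a = 0)) := by tauto
  have h2 : (a = b ∧ a ≠ 0 ∧ a ≠ Fin.last d) ↔ (b = a ∧ b ≠ 0 ∧ b ≠ Fin.last d) := by
    constructor <;> rintro ⟨rfl, h⟩ <;> exact ⟨rfl, h⟩
  rw [if_congr h1 rfl rfl, if_congr h2 rfl rfl]

lemma Jmat_sq (hd : 1 ≤ d) [NeZero d] : Jmat d * Jmat d = 1 := by
  have hcol : ∀ i j, (Jmat d * Jmat d) i j = (Jmat d *ᵥ (fun a => Jmat d a j)) i := by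
    intro i j
    rw [Matrix.mul_apply]
    rfl
  ext i j
  rw [hcol]
  refine Fin.lastCases ?_ ?_ i
  · rw [Jmat_mulVec_last hd, zero_eq_castSucc_zero]
    refine Fin.lastCases ?_ ?_ j
    · rw [Jmat_cl hd, if_pos rfl, Matrix.one_apply_eq]
    · intro k'
      rw [Jmat_cc]
      rw [if_neg (by rintro ⟨-, h⟩; exact h rfl), Matrix.one_apply_ne (Ne.symm (castSucc_ne_last' k'))]
  · intro k
    rw [Jmat_mulVec_castSucc hd]
    by_cases hk : k = 0
    · subst hk
      rw [if_pos rfl]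
      refine Fin.lastCases ?_ ?_ j
      · rw [Jmat_ll hd, Matrix.one_apply_ne (castSucc_ne_last' 0)]
      · intro k'
        rw [Jmat_lc hd]
        by_cases hk' : k' = 0
        · subst hk'
          rw [if_pos rfl, Matrix.one_apply_eq]
        · rw [if_neg hk', Matrix.one_apply_ne]
          rw [Ne, Fin.castSucc_inj]
          exact fun h => hk' h.symm
    · rw [if_neg hk]
      refine Fin.lastCases ?_ ?_ j
      · rw [Jmat_cl hd, if_neg hk, Matrix.one_apply_ne (castSucc_ne_last' k)]
      · intro k'
        rw [Jmat_cc]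
        by_cases hkk : k = k'
        · subst hkk
          rw [if_pos ⟨rfl, hk⟩, Matrix.one_apply_eq]
        · rw [if_neg (by rintro ⟨h, -⟩; exact hkk h), Matrix.one_apply_ne]
          rw [Ne, Fin.castSucc_inj]
          exact hkk

lemma MJMH (hd : 1 ≤ d) [NeZero d] {M : Matrix (Fin (d+1)) (Fin (d+1)) ℂ}
    (hM : Mᴴ * Jmat d * M = Jmat d) : M * Jmat d * Mᴴ = Jmat d := by
  have h1 : (Jmat d * Mᴴ * Jmat d) * M = 1 := by
    calc (Jmat d * Mᴴ * Jmat d) * M = Jmat d * (Mᴴ * Jmat d * M) := by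
          simp only [Matrix.mul_assoc]
      _ = Jmat d * Jmat d := by rw [hM]
      _ = 1 := Jmat_sq hd
  have h2 : M * (Jmat d * Mᴴ * Jmat d) = 1 := mul_eq_one_comm.mpr h1
  calc M * Jmat d * Mᴴ = M * Jmat d * Mᴴ * (Jmat d * Jmat d) := by rw [Jmat_sq hd, mul_one]
    _ = (M * (Jmat d * Mᴴ * Jmat d)) * Jmat d := by simp only [Matrix.mul_assoc]
    _ = Jmat d := by rw [h2, one_mul]

lemma row_rel (hd : 1 ≤ d) [NeZero d] {M : Matrix (Fin (d+1)) (Fin (d+1)) ℂ}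
    (hM : Mᴴ * Jmat d * M = Jmat d) :
    M (Fin.last d) (Fin.castSucc 0) * (starRingEnd ℂ) (M (Fin.last d) (Fin.last d))
      + M (Fin.last d) (Fin.last d) * (starRingEnd ℂ) (M (Fin.last d) (Fin.castSucc 0))
      + ∑ k ∈ Finset.univ.erase (0 : Fin d),
          ((Complex.normSq (M (Fin.last d) (Fin.castSucc k)) : ℂ)) = 0 := by
  set r : Fin (d+1) → ℂ := fun b => M (Fin.last d) b with hr
  have h1 : (M * Jmat d * Mᴴ) (Fin.last d) (Fin.last d) = 0 := by
    rw [MJMH hd hM, Jmat_ll hd]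
  rw [Matrix.mul_apply] at h1
  have h2 : ∀ b, (M * Jmat d) (Fin.last d) b = (Jmat d *ᵥ r) b := by
    intro b
    rw [Matrix.mul_apply]
    show _ = ∑ a, Jmat d b a * r a
    refine Finset.sum_congr rfl (fun a _ => ?_)
    rw [Jmat_symm a b]
    exact mul_comm _ _
  have h3 : ∑ b, (Jmat d *ᵥ r) b * (starRingEnd ℂ) (r b) = 0 := by
    rw [← h1]
    refine Finset.sum_congr rfl (fun b _ => ?_)
    rw [h2 b, Matrix.conjTranspose_apply]
    rfl
  rw [Fin.sum_univ_castSucc (f := fun b => (Jmat d *ᵥ r) b * (starRingEnd ℂ) (r b))] at h3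
  have h4 : ∀ k : Fin d, (Jmat d *ᵥ r) (Fin.castSucc k) * (starRingEnd ℂ) (r (Fin.castSucc k))
      = if k = 0 then r (Fin.last d) * (starRingEnd ℂ) (r (Fin.castSucc 0))
        else (Complex.normSq (r (Fin.castSucc k)) : ℂ) := by
    intro k
    rw [Jmat_mulVec_castSucc hd]
    by_cases hk : k = 0
    · subst hk
      simp
    · rw [if_neg hk, if_neg hk, Complex.mul_conj]
  rw [Finset.sum_congr rfl (fun k _ => h4 k),
    ← Finset.add_sum_erase Finset.univ _ (Finset.mem_univ (0 : Fin d)),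
    Jmat_mulVec_last hd] at h3
  have h5 : ∑ k ∈ Finset.univ.erase (0 : Fin d),
      (if k = 0 then r (Fin.last d) * (starRingEnd ℂ) (r (Fin.castSucc 0))
        else (Complex.normSq (r (Fin.castSucc k)) : ℂ))
      = ∑ k ∈ Finset.univ.erase (0 : Fin d), ((Complex.normSq (r (Fin.castSucc k)) : ℂ)) := by
    refine Finset.sum_congr rfl (fun k hk => ?_)
    rw [if_neg (Finset.ne_of_mem_erase hk)]
  rw [if_pos rfl, h5] at h3
  have h6 : r 0 = r (Fin.castSucc 0) := by rw [zero_eq_castSucc_zero]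
  rw [h6] at h3
  calc M (Fin.last d) (Fin.castSucc 0) * (starRingEnd ℂ) (M (Fin.last d) (Fin.last d))
        + M (Fin.last d) (Fin.last d) * (starRingEnd ℂ) (M (Fin.last d) (Fin.castSucc 0))
        + ∑ k ∈ Finset.univ.erase (0 : Fin d),
            ((Complex.normSq (M (Fin.last d) (Fin.castSucc k)) : ℂ))
      = r (Fin.last d) * (starRingEnd ℂ) (r (Fin.castSucc 0))
        + ∑ k ∈ Finset.univ.erase (0 : Fin d), ((Complex.normSq (r (Fin.castSucc k)) : ℂ))
        + r (Fin.castSucc 0) * (starRingEnd ℂ) (r (Fin.last d)) := by ring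
    _ = 0 := h3

lemma mulVec_snoc_apply (M : Matrix (Fin (d+1)) (Fin (d+1)) ℂ) (τ : Fin d → ℂ) (i : Fin (d+1)) :
    (M *ᵥ Fin.snoc τ 1) i = (∑ k, M i (Fin.castSucc k) * τ k) + M i (Fin.last d) := by
  show (fun j => M i j) ⬝ᵥ Fin.snoc τ 1 = _
  rw [dotProduct, Fin.sum_univ_castSucc]
  simp

lemma jfun_eq (M : Matrix (Fin (d+1)) (Fin (d+1)) ℂ) (τ : Fin d → ℂ) :
    jfun d M τ = (∑ k, M (Fin.last d) (Fin.castSucc k) * τ k) + M (Fin.last d) (Fin.last d) :=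
  mulVec_snoc_apply M τ (Fin.last d)

end AuxMat
section AuxPos

open Fin Finset

variable {d : ℕ}

lemma Xfun_of_ne {M : Matrix (Fin (d+1)) (Fin (d+1)) ℂ} (h : M (Fin.last d) 0 ≠ 0) :
    Xfun d M = -(M (Fin.last d) 0) := by
  rw [Xfun, if_neg h]

lemma Xfun_of_eq {M : Matrix (Fin (d+1)) (Fin (d+1)) ℂ} (h : M (Fin.last d) 0 = 0) :
    Xfun d M = M (Fin.last d) (Fin.last d) := by
  rw [Xfun, if_pos h]

/-- The key positivity: `Re(j(g,τ)/X(g)) > 0` on the domain. -/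
lemma re_jfun_div_X_pos (hd : 1 ≤ d) [NeZero d] {M : Matrix (Fin (d+1)) (Fin (d+1)) ℂ}
    (hM : Mᴴ * Jmat d * M = Jmat d) (hdet : M.det = 1) {τ : Fin d → ℂ} (hτ : τ ∈ Hdom d) :
    0 < (jfun d M τ / Xfun d M).re := by
  have hrow := row_rel hd hM
  set c : Fin d → ℂ := fun k => M (Fin.last d) (Fin.castSucc k) with hc
  set D : ℂ := M (Fin.last d) (Fin.last d) with hD
  have hj : jfun d M τ = (∑ k, c k * τ k) + D := jfun_eq M τ
  have hM0 : M (Fin.last d) 0 = c 0 := by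
    show M (Fin.last d) 0 = M (Fin.last d) (Fin.castSucc 0)
    rw [← zero_eq_castSucc_zero]
  rw [mem_Hdom_iff hd] at hτ
  unfold hval at hτ
  by_cases h0 : c 0 = 0
  · -- degenerate case : last row is (0,...,0,D)
    have hsum0 : ∑ k ∈ Finset.univ.erase (0 : Fin d), Complex.normSq (c k) = 0 := by
      have h1 : ∑ k ∈ Finset.univ.erase (0 : Fin d), ((Complex.normSq (c k) : ℂ)) = 0 := by
        have h2 := hrow
        rw [show M (Fin.last d) (Fin.castSucc 0) = c 0 from rfl, h0] at h2
        simp at h2 ⊢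
        exact h2
      exact_mod_cast h1
    have hall : ∀ k : Fin d, c k = 0 := by
      intro k
      by_cases hk : k = 0
      · rw [hk]; exact h0
      · refine Complex.normSq_eq_zero.mp ?_
        exact (Finset.sum_eq_zero_iff_of_nonneg
          (fun k _ => Complex.normSq_nonneg (c k))).mp hsum0 k
          (Finset.mem_erase.mpr ⟨hk, Finset.mem_univ k⟩)
    have hD0 : D ≠ 0 := by
      intro h
      have hrow0 : ∀ j, M (Fin.last d) j = 0 := by
        intro j
        refine Fin.lastCases ?_ ?_ j
        · exact h
        · intro k; exact hall k
      have hdet0 := Matrix.det_eq_zero_of_row_eq_zero (Fin.last d) hrow0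
      rw [hdet] at hdet0
      exact one_ne_zero hdet0
    have hjD : jfun d M τ = D := by
      rw [hj, Finset.sum_eq_zero (fun k _ => by rw [hall k, zero_mul]), zero_add]
    rw [hjD, Xfun_of_eq (by rw [hM0]; exact h0), ← hD, div_self hD0]
    norm_num
  · -- main case
    have hconj0 : (starRingEnd ℂ) (c 0) ≠ 0 := by
      simpa using h0
    have hX : Xfun d M = -(c 0) := by rw [Xfun_of_ne (by rw [hM0]; exact h0), hM0]
    set A : ℝ := ∑ k ∈ Finset.univ.erase (0 : Fin d), Complex.normSq (τ k) with hA
    set B : ℝ := ∑ k ∈ Finset.univ.erase (0 : Fin d), Complex.normSq (c k) with hB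
    have hnc0 : 0 < Complex.normSq (c 0) := Complex.normSq_pos.mpr h0
    -- real part of the row relation
    have e2 : ∑ k ∈ Finset.univ.erase (0 : Fin d),
        ((Complex.normSq (M (Fin.last d) (Fin.castSucc k)) : ℂ)) = ((B : ℝ) : ℂ) := by
      rw [hB]
      push_cast
      rfl
    rw [e2] at hrow
    have e1 : c 0 * (starRingEnd ℂ) D = (starRingEnd ℂ) (D * (starRingEnd ℂ) (c 0)) := by
      rw [RingHom.map_mul, Complex.conj_conj]
      ring
    have hrow' : ((2 * (D * (starRingEnd ℂ) (c 0)).re + B : ℝ) : ℂ) = 0 := by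
      calc ((2 * (D * (starRingEnd ℂ) (c 0)).re + B : ℝ) : ℂ)
          = (D * (starRingEnd ℂ) (c 0) + (starRingEnd ℂ) (D * (starRingEnd ℂ) (c 0))) + (B : ℂ) := by
            rw [Complex.add_conj]
            push_cast
            ring
        _ = c 0 * (starRingEnd ℂ) D + D * (starRingEnd ℂ) (c 0) + (B : ℂ) := by
            rw [e1]
            ring
        _ = 0 := hrow
    have hDre : 2 * (D * (starRingEnd ℂ) (c 0)).re + B = 0 := by exact_mod_cast hrow'
    -- per-term bound for the middle entries
    have hterm : ∀ k ∈ Finset.univ.erase (0 : Fin d),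
        (c k * τ k * (starRingEnd ℂ) (c 0)).re
          ≤ (Complex.normSq (c 0) * Complex.normSq (τ k) + Complex.normSq (c k)) / 2 := by
      intro k _
      have h1 : (c k * τ k * (starRingEnd ℂ) (c 0)).re
          ≤ ‖c k‖ * ‖τ k‖ * ‖c 0‖ := by
        calc (c k * τ k * (starRingEnd ℂ) (c 0)).re
            ≤ ‖c k * τ k * (starRingEnd ℂ) (c 0)‖ := Complex.re_le_norm _
          _ = ‖c k‖ * ‖τ k‖ * ‖c 0‖ := by
              rw [norm_mul, norm_mul, Complex.norm_conj]
      nlinarith [h1, sq_nonneg (‖c 0‖ * ‖τ k‖ - ‖c k‖),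
        Complex.sq_norm (c 0), Complex.sq_norm (τ k), Complex.sq_norm (c k),
        norm_nonneg (c 0), norm_nonneg (τ k), norm_nonneg (c k)]
    -- the main strict inequality
    have hmain : (jfun d M τ * (starRingEnd ℂ) (c 0)).re < 0 := by
      rw [hj, add_mul, Finset.sum_mul, Complex.add_re, Complex.re_sum]
      rw [← Finset.add_sum_erase Finset.univ
        (fun k => (c k * τ k * (starRingEnd ℂ) (c 0)).re) (Finset.mem_univ (0 : Fin d))]
      have e0 : (c 0 * τ 0 * (starRingEnd ℂ) (c 0)).re = Complex.normSq (c 0) * (τ 0).re := by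
        have e1 : c 0 * τ 0 * (starRingEnd ℂ) (c 0)
            = ((Complex.normSq (c 0) : ℝ) : ℂ) * τ 0 := by
          rw [← Complex.mul_conj]
          ring
        rw [e1, Complex.re_ofReal_mul]
      have hS : ∑ k ∈ Finset.univ.erase (0 : Fin d), (c k * τ k * (starRingEnd ℂ) (c 0)).re
          ≤ (Complex.normSq (c 0) * A + B) / 2 := by
        calc ∑ k ∈ Finset.univ.erase (0 : Fin d), (c k * τ k * (starRingEnd ℂ) (c 0)).re
            ≤ ∑ k ∈ Finset.univ.erase (0 : Fin d),
              (Complex.normSq (c 0) * Complex.normSq (τ k) + Complex.normSq (c k)) / 2 :=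
              Finset.sum_le_sum hterm
          _ = (Complex.normSq (c 0) * A + B) / 2 := by
              rw [← Finset.sum_div, Finset.sum_add_distrib, ← Finset.mul_sum, hA, hB]
      have hint : Complex.normSq (c 0) * (2 * (τ 0).re + A) < 0 :=
        mul_neg_of_pos_of_neg hnc0 hτ
      rw [e0]
      nlinarith [hint, hS, hDre]
    -- convert to the statement about the quotient
    have hcc : ((Complex.normSq (c 0) : ℝ) : ℂ) = c 0 * (starRingEnd ℂ) (c 0) :=
      (Complex.mul_conj _).symm
    have hdiv : jfun d M τ / Xfun d M
        = -(jfun d M τ * (starRingEnd ℂ) (c 0)) / ((Complex.normSq (c 0) : ℝ) : ℂ) := by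
      rw [hX, hcc, div_eq_div_iff (neg_ne_zero.mpr h0) (mul_ne_zero h0 hconj0)]
      ring
    rw [hdiv, Complex.div_ofReal_re, Complex.neg_re]
    exact div_pos (by linarith [hmain]) hnc0

lemma jfun_div_X_slit (hd : 1 ≤ d) [NeZero d] {M : Matrix (Fin (d+1)) (Fin (d+1)) ℂ}
    (hM : Mᴴ * Jmat d * M = Jmat d) (hdet : M.det = 1) {τ : Fin d → ℂ} (hτ : τ ∈ Hdom d) :
    jfun d M τ / Xfun d M ∈ Complex.slitPlane :=
  Complex.mem_slitPlane_iff.mpr (Or.inl (re_jfun_div_X_pos hd hM hdet hτ))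

lemma Xfun_ne_zero (hd : 1 ≤ d) [NeZero d] {M : Matrix (Fin (d+1)) (Fin (d+1)) ℂ}
    (hM : Mᴴ * Jmat d * M = Jmat d) (hdet : M.det = 1) : Xfun d M ≠ 0 := by
  intro h
  have h1 := re_jfun_div_X_pos hd hM hdet (baseTau_mem hd)
  rw [h, div_zero] at h1
  simp at h1

lemma jfun_ne_zero (hd : 1 ≤ d) [NeZero d] {M : Matrix (Fin (d+1)) (Fin (d+1)) ℂ}
    (hM : Mᴴ * Jmat d * M = Jmat d) (hdet : M.det = 1) {τ : Fin d → ℂ} (hτ : τ ∈ Hdom d) :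
    jfun d M τ ≠ 0 := by
  intro h
  have h1 := re_jfun_div_X_pos hd hM hdet hτ
  rw [h, zero_div] at h1
  simp at h1

lemma exp_jtilde (hd : 1 ≤ d) [NeZero d] {M : Matrix (Fin (d+1)) (Fin (d+1)) ℂ}
    (hM : Mᴴ * Jmat d * M = Jmat d) (hdet : M.det = 1) {τ : Fin d → ℂ} (hτ : τ ∈ Hdom d) :
    Complex.exp (jtilde d M τ) = jfun d M τ := by
  have hX := Xfun_ne_zero hd hM hdet
  have hjX : jfun d M τ / Xfun d M ≠ 0 :=
    div_ne_zero (jfun_ne_zero hd hM hdet hτ) hX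
  rw [jtilde, Complex.exp_add, Complex.exp_log hjX, Complex.exp_log hX,
    div_mul_cancel₀ _ hX]

end AuxPos
section AuxCocycle

open Fin Finset

variable {d : ℕ}

lemma Hform_invariant {N : Matrix (Fin (d+1)) (Fin (d+1)) ℂ}
    (hN : Nᴴ * Jmat d * N = Jmat d) (v : Fin (d+1) → ℂ) :
    Hform d (N *ᵥ v) (N *ᵥ v) = Hform d v v := by
  unfold Hform
  calc star (N *ᵥ v) ⬝ᵥ (Jmat d *ᵥ (N *ᵥ v))
      = (star v ᵥ* Nᴴ) ⬝ᵥ (Jmat d *ᵥ (N *ᵥ v)) := by rw [Matrix.star_mulVec]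
    _ = star v ⬝ᵥ (Nᴴ *ᵥ (Jmat d *ᵥ (N *ᵥ v))) := (Matrix.dotProduct_mulVec _ _ _).symm
    _ = star v ⬝ᵥ ((Nᴴ * Jmat d * N) *ᵥ v) := by
        rw [Matrix.mulVec_mulVec, Matrix.mulVec_mulVec]
    _ = star v ⬝ᵥ (Jmat d *ᵥ v) := by rw [hN]

lemma mulVec_snoc_eq_smul (hd : 1 ≤ d) [NeZero d] {N : Matrix (Fin (d+1)) (Fin (d+1)) ℂ}
    (hN : Nᴴ * Jmat d * N = Jmat d) (hdet : N.det = 1) {τ : Fin d → ℂ} (hτ : τ ∈ Hdom d) :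
    N *ᵥ Fin.snoc τ 1 = jfun d N τ • (Fin.snoc (actH d N τ) 1 : Fin (d+1) → ℂ) := by
  have hj : jfun d N τ ≠ 0 := jfun_ne_zero hd hN hdet hτ
  funext i
  refine Fin.lastCases ?_ ?_ i
  · rw [Pi.smul_apply, Fin.snoc_last, smul_eq_mul, mul_one]
    rfl
  · intro k
    rw [Pi.smul_apply, Fin.snoc_castSucc, smul_eq_mul]
    show (N *ᵥ Fin.snoc τ 1) (Fin.castSucc k)
      = jfun d N τ * ((N *ᵥ Fin.snoc τ 1) (Fin.castSucc k) / jfun d N τ)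
    rw [mul_comm, div_mul_cancel₀ _ hj]

lemma actH_mem (hd : 1 ≤ d) [NeZero d] {N : Matrix (Fin (d+1)) (Fin (d+1)) ℂ}
    (hN : Nᴴ * Jmat d * N = Jmat d) (hdet : N.det = 1) {τ : Fin d → ℂ} (hτ : τ ∈ Hdom d) :
    actH d N τ ∈ Hdom d := by
  have hns : 0 < Complex.normSq (jfun d N τ) :=
    Complex.normSq_pos.mpr (jfun_ne_zero hd hN hdet hτ)
  have h1 : Hform d (Fin.snoc τ 1) (Fin.snoc τ 1)
      = ((Complex.normSq (jfun d N τ) : ℝ) : ℂ)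
        * Hform d (Fin.snoc (actH d N τ) 1) (Fin.snoc (actH d N τ) 1) := by
    rw [← Hform_invariant hN (Fin.snoc τ 1), mulVec_snoc_eq_smul hd hN hdet hτ]
    unfold Hform
    rw [star_smul, Matrix.mulVec_smul, dotProduct_smul, smul_dotProduct]
    rw [smul_smul, smul_eq_mul]
    congr 1
    rw [Complex.star_def]
    exact Complex.mul_conj _
  rw [Hform_snoc hd, Hform_snoc hd] at h1
  have h2 : hval d τ = Complex.normSq (jfun d N τ) * hval d (actH d N τ) := by
    exact_mod_cast h1
  rw [mem_Hdom_iff hd] at hτ ⊢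
  nlinarith [hτ, hns, h2]

lemma jfun_cocycle (hd : 1 ≤ d) [NeZero d] {M N : Matrix (Fin (d+1)) (Fin (d+1)) ℂ}
    (hN : Nᴴ * Jmat d * N = Jmat d) (hdetN : N.det = 1) {τ : Fin d → ℂ} (hτ : τ ∈ Hdom d) :
    jfun d (M * N) τ = jfun d M (actH d N τ) * jfun d N τ := by
  show ((M * N) *ᵥ Fin.snoc τ 1) (Fin.last d) = _
  rw [← Matrix.mulVec_mulVec, mulVec_snoc_eq_smul hd hN hdetN hτ, Matrix.mulVec_smul]
  rw [Pi.smul_apply, smul_eq_mul, mul_comm]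
  rfl

lemma su_mul {M N : Matrix (Fin (d+1)) (Fin (d+1)) ℂ}
    (hM : Mᴴ * Jmat d * M = Jmat d) (hN : Nᴴ * Jmat d * N = Jmat d) :
    (M * N)ᴴ * Jmat d * (M * N) = Jmat d := by
  rw [Matrix.conjTranspose_mul]
  calc Nᴴ * Mᴴ * Jmat d * (M * N) = Nᴴ * (Mᴴ * Jmat d * M) * N := by
        simp only [Matrix.mul_assoc]
    _ = Nᴴ * Jmat d * N := by rw [hM]
    _ = Jmat d := hN

lemma continuous_coord (M : Matrix (Fin (d+1)) (Fin (d+1)) ℂ) (i : Fin (d+1)) :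
    Continuous fun τ : Fin d → ℂ => (M *ᵥ Fin.snoc τ 1) i := by
  have h : (fun τ : Fin d → ℂ => (M *ᵥ Fin.snoc τ 1) i)
      = fun τ => (∑ k, M i (Fin.castSucc k) * τ k) + M i (Fin.last d) :=
    funext fun τ => mulVec_snoc_apply M τ i
  rw [h]
  exact (continuous_finset_sum _ fun k _ =>
    continuous_const.mul (continuous_apply k)).add continuous_const

lemma continuous_jfun (M : Matrix (Fin (d+1)) (Fin (d+1)) ℂ) :
    Continuous (jfun d M) :=
  continuous_coord M (Fin.last d)

lemma continuousOn_jtilde (hd : 1 ≤ d) [NeZero d] {M : Matrix (Fin (d+1)) (Fin (d+1)) ℂ}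
    (hM : Mᴴ * Jmat d * M = Jmat d) (hdet : M.det = 1) :
    ContinuousOn (jtilde d M) (Hdom d) := by
  intro τ hτ
  apply ContinuousAt.continuousWithinAt
  refine ContinuousAt.add ?_ continuousAt_const
  exact ContinuousAt.clog (((continuous_jfun M).continuousAt).div_const _)
    (jfun_div_X_slit hd hM hdet hτ)

lemma continuousOn_actH (hd : 1 ≤ d) [NeZero d] {N : Matrix (Fin (d+1)) (Fin (d+1)) ℂ}
    (hN : Nᴴ * Jmat d * N = Jmat d) (hdet : N.det = 1) :
    ContinuousOn (actH d N) (Hdom d) := by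
  rw [continuousOn_pi]
  intro k τ hτ
  apply ContinuousAt.continuousWithinAt
  exact ((continuous_coord N (Fin.castSucc k)).continuousAt).div
    ((continuous_jfun N).continuousAt) (jfun_ne_zero hd hN hdet hτ)

/-- The additive cocycle defect of `jtilde`. -/
def SigF (d : ℕ) (M N : Matrix (Fin (d+1)) (Fin (d+1)) ℂ) (τ : Fin d → ℂ) : ℂ :=
  jtilde d (M * N) τ - jtilde d M (actH d N τ) - jtilde d N τ

lemma sig_exists_int (hd : 1 ≤ d) [NeZero d] {M N : Matrix (Fin (d+1)) (Fin (d+1)) ℂ}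
    (hM : Mᴴ * Jmat d * M = Jmat d) (hdetM : M.det = 1)
    (hN : Nᴴ * Jmat d * N = Jmat d) (hdetN : N.det = 1)
    {τ : Fin d → ℂ} (hτ : τ ∈ Hdom d) :
    ∃ m : ℤ, SigF d M N τ = m * (2 * Real.pi * Complex.I) := by
  have hτ' : actH d N τ ∈ Hdom d := actH_mem hd hN hdetN hτ
  have hMN : (M * N)ᴴ * Jmat d * (M * N) = Jmat d := su_mul hM hN
  have hdetMN : (M * N).det = 1 := by rw [Matrix.det_mul, hdetM, hdetN, mul_one]
  apply Complex.exp_eq_one_iff.mp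
  rw [SigF, Complex.exp_sub, Complex.exp_sub,
    exp_jtilde hd hMN hdetMN hτ, exp_jtilde hd hM hdetM hτ', exp_jtilde hd hN hdetN hτ,
    jfun_cocycle hd hN hdetN hτ]
  rw [div_div]
  exact div_self (mul_ne_zero (jfun_ne_zero hd hM hdetM hτ') (jfun_ne_zero hd hN hdetN hτ))

lemma sig_const (hd : 1 ≤ d) [NeZero d] {M N : Matrix (Fin (d+1)) (Fin (d+1)) ℂ}
    (hM : Mᴴ * Jmat d * M = Jmat d) (hdetM : M.det = 1)
    (hN : Nᴴ * Jmat d * N = Jmat d) (hdetN : N.det = 1)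
    {τ : Fin d → ℂ} (hτ : τ ∈ Hdom d) :
    SigF d M N τ = (sigmaZ d M N : ℂ) * (2 * Real.pi * Complex.I) := by
  have hMN : (M * N)ᴴ * Jmat d * (M * N) = Jmat d := su_mul hM hN
  have hdetMN : (M * N).det = 1 := by rw [Matrix.det_mul, hdetM, hdetN, mul_one]
  have hcont : ContinuousOn (fun σ => (SigF d M N σ).im) (Hdom d) := by
    refine Complex.continuous_im.comp_continuousOn ?_
    refine ContinuousOn.sub (ContinuousOn.sub ?_ ?_) ?_
    · exact continuousOn_jtilde hd hMN hdetMN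
    · exact (continuousOn_jtilde hd hM hdetM).comp (continuousOn_actH hd hN hdetN)
        (fun σ hσ => actH_mem hd hN hdetN hσ)
    · exact continuousOn_jtilde hd hN hdetN
  have himage : ∀ x ∈ (fun σ => (SigF d M N σ).im) '' (Hdom d),
      ∃ m : ℤ, x = 2 * Real.pi * m := by
    rintro x ⟨σ, hσ, rfl⟩
    obtain ⟨m, hm⟩ := sig_exists_int hd hM hdetM hN hdetN hσ
    refine ⟨m, ?_⟩
    dsimp only
    rw [hm]
    simp
    ring
  have hsub := preconnected_twoPiInt_subsingleton
    ((preconnected_Hdom hd).image _ hcont) himage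
  have hbase := baseTau_mem hd (d := d)
  have him_eq : (SigF d M N τ).im = (SigF d M N (baseTau d)).im :=
    hsub _ (Set.mem_image_of_mem _ hτ) _ (Set.mem_image_of_mem _ hbase)
  obtain ⟨m, hm⟩ := sig_exists_int hd hM hdetM hN hdetN hτ
  obtain ⟨m0, hm0⟩ := sig_exists_int hd hM hdetM hN hdetN hbase
  have eim : ∀ mm : ℤ, (((mm : ℂ)) * (2 * (Real.pi:ℝ) * Complex.I)).im
      = 2 * Real.pi * (mm : ℝ) := by
    intro mm
    simp
    ring
  have hmm : m = m0 := by
    rw [hm, hm0, eim m, eim m0] at him_eq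
    have h2π : (2 * Real.pi : ℝ) ≠ 0 := by positivity
    have : (m : ℝ) = m0 := mul_left_cancel₀ h2π him_eq
    exact_mod_cast this
  -- identify `m0` with `sigmaZ`
  have hC : sigmaC d M N = (m0 : ℂ) := by
    have h2 : sigmaC d M N = SigF d M N (baseTau d) / (2 * Real.pi * Complex.I) := rfl
    rw [h2, hm0, mul_div_assoc, div_self Complex.two_pi_I_ne_zero, mul_one]
  have hZ : sigmaZ d M N = m0 := by
    rw [sigmaZ, hC]
    simp
  rw [hm, hmm, hZ]

end AuxCocycle
section AuxQ

lemma exists_qlin : ∃ f : ℝ →ₗ[ℚ] ℚ, ∀ q : ℚ, f (q : ℝ) = q := by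
  have hli : LinearIndepOn ℚ id ({(1:ℝ)} : Set ℝ) :=
    (linearIndepOn_singleton_iff ℚ).mpr one_ne_zero
  have hmem : (1:ℝ) ∈ hli.extend (Set.subset_univ _) :=
    hli.subset_extend (Set.subset_univ _) rfl
  refine ⟨(Module.Basis.extend hli).coord ⟨1, hmem⟩, fun q => ?_⟩
  have h1 : (q : ℝ) = q • (1 : ℝ) := by rw [Rat.smul_one_eq_cast]
  rw [h1, _root_.map_smul, smul_eq_mul]
  have h3 : ((Module.Basis.extend hli).coord ⟨1, hmem⟩) ((Module.Basis.extend hli) ⟨1, hmem⟩) = 1 := by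
    rw [Module.Basis.coord_apply, Module.Basis.repr_self, Finsupp.single_eq_same]
  rw [Module.Basis.extend_apply_self] at h3
  rw [show ((Module.Basis.extend hli).coord ⟨1, hmem⟩) (1:ℝ) = 1 from h3, mul_one]

lemma roots_finite (n : ℕ) (hn : 0 < n) (c : ℂ) : {z : ℂ | z ^ n = c}.Finite := by
  refine Set.Finite.subset (Polynomial.nthRoots n c).toFinset.finite_toSet ?_
  intro z hz
  rw [Finset.mem_coe, Multiset.mem_toFinset, Polynomial.mem_nthRoots hn]
  exact hz

end AuxQ
section AuxMem

lemma mem_SUd1 {d : ℕ} {g : SLC (d+1)} (h : g ∈ SUd1 d) :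
    (↑g : Matrix (Fin (d+1)) (Fin (d+1)) ℂ)ᴴ * Jmat d * (↑g : Matrix (Fin (d+1)) (Fin (d+1)) ℂ) = Jmat d := h

lemma sig_const' {d : ℕ} (hd : 1 ≤ d) [NeZero d] {M N : Matrix (Fin (d+1)) (Fin (d+1)) ℂ}
    (hM : Mᴴ * Jmat d * M = Jmat d) (hdetM : M.det = 1)
    (hN : Nᴴ * Jmat d * N = Jmat d) (hdetN : N.det = 1)
    {τ : Fin d → ℂ} (hτ : τ ∈ Hdom d) :
    jtilde d (M * N) τ - jtilde d M (actH d N τ) - jtilde d N τ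
      = (sigmaZ d M N : ℂ) * (2 * Real.pi * Complex.I) :=
  sig_const hd hM hdetM hN hdetN hτ

end AuxMem

section AuxIm

lemma intCast_two_pi_I_im (m : ℤ) :
    (((m : ℂ)) * (2 * Real.pi * Complex.I)).im = 2 * Real.pi * m := by
  simp
  ring

lemma neg_sigma_div_im (σ : ℤ) (n : ℕ) :
    ((-(((σ : ℂ)) * (2 * Real.pi * Complex.I))) / (n : ℂ)).im = -(2 * Real.pi * σ) / n := by
  rw [show ((n : ℂ)) = (((n : ℝ)) : ℂ) by push_cast; rfl, Complex.div_ofReal_im]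
  congr 1
  rw [Complex.neg_im, intCast_two_pi_I_im]

end AuxIm

/-- A subgroup `Γ` of `SU(d,1)` carries a multiplier system of weight `1/n`
if and only if the restriction of the cocycle `σ` to `Γ` splits modulo `n`, i.e. iff there is
`κ : Γ → ℚ` with `σ(g,h) − (κ(gh) − κ(g) − κ(h)) ∈ nℤ` for all `g,h ∈ Γ`. -/
theorem statement8 (d : ℕ) (hd : 2 ≤ d) (Γ : Subgroup (SLC (d+1)))
    (hΓ : Γ ≤ SUd1 d) (n : ℕ) (hn : 0 < n) :
    (∃ ℓ : SLC (d+1) → (Fin d → ℂ) → ℂ,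
        IsMultiplierSystem d (Γ : Set (SLC (d+1))) 1 n ℓ) ↔
    (∃ κ : ↥Γ → ℚ, ∀ g h : ↥Γ, ∃ t : ℤ,
        ((sigmaZ d ((g : SLC (d+1)) : Matrix (Fin (d+1)) (Fin (d+1)) ℂ)
            ((h : SLC (d+1)) : Matrix (Fin (d+1)) (Fin (d+1)) ℂ) : ℚ))
          - (κ (g * h) - κ g - κ h) = (n : ℚ) * t) := by
  haveI : NeZero d := ⟨by omega⟩
  have hd1 : 1 ≤ d := by omega
  have hn' : (n : ℂ) ≠ 0 := Nat.cast_ne_zero.mpr hn.ne'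
  have hsu : ∀ s : SLC (d+1), s ∈ Γ →
      (↑s : Matrix (Fin (d+1)) (Fin (d+1)) ℂ)ᴴ * Jmat d
        * (↑s : Matrix (Fin (d+1)) (Fin (d+1)) ℂ) = Jmat d :=
    fun s hs => mem_SUd1 (hΓ hs)
  have hdet : ∀ s : SLC (d+1), (↑s : Matrix (Fin (d+1)) (Fin (d+1)) ℂ).det = 1 :=
    fun s => Matrix.SpecialLinearGroup.det_coe s
  constructor
  · -- forward direction
    rintro ⟨ℓ, hne, hmul, ⟨χ, hχmul, hχpow⟩, hcont⟩
    have hbase : baseTau d ∈ Hdom d := baseTau_mem hd1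
    have hmem : ∀ γ : ↥Γ, (↑γ : SLC (d+1)) ∈ (Γ : Set (SLC (d+1))) := fun γ => γ.2
    set E : ↥Γ → (Fin d → ℂ) → ℂ := fun γ τ =>
      Complex.exp (jtilde d (↑↑γ) τ / n) with hEdef
    have hEne : ∀ γ τ, E γ τ ≠ 0 := fun γ τ => Complex.exp_ne_zero _
    have hEpow : ∀ γ : ↥Γ, ∀ τ ∈ Hdom d, E γ τ ^ n = jfun d (↑↑γ) τ := by
      intro γ τ hτ
      rw [hEdef]
      dsimp only
      rw [← Complex.exp_nat_mul, mul_div_cancel₀ _ hn',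
        exp_jtilde hd1 (hsu ↑γ γ.2) (hdet ↑γ) hτ]
    set w : ↥Γ → ℂ := fun γ => ℓ ↑γ (baseTau d) / E γ (baseTau d) with hwdef
    have hw0 : ∀ γ, w γ ≠ 0 := fun γ =>
      div_ne_zero (hne ↑γ (hmem γ) _ hbase) (hEne γ _)
    have hjne : ∀ γ : ↥Γ, ∀ τ ∈ Hdom d, jfun d (↑↑γ) τ ≠ 0 :=
      fun γ τ hτ => jfun_ne_zero hd1 (hsu ↑γ γ.2) (hdet ↑γ) hτ
    have hχ0 : ∀ γ : ↥Γ, χ ↑γ ≠ 0 := by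
      intro γ hzero
      have h1 := hχpow ↑γ (hmem γ) (baseTau d) hbase
      rw [hzero, zero_mul] at h1
      exact hne ↑γ (hmem γ) _ hbase ((pow_eq_zero_iff hn.ne').mp h1)
    have hwpow : ∀ γ : ↥Γ, w γ ^ n = χ ↑γ := by
      intro γ
      rw [hwdef]
      dsimp only
      rw [div_pow, hEpow γ _ hbase, hχpow ↑γ (hmem γ) _ hbase, pow_one,
        mul_div_cancel_right₀ _ (hjne γ _ hbase)]
    -- Claim A: ℓ is determined by w and E on the whole domain
    have claimA : ∀ γ : ↥Γ, ∀ τ₀ ∈ Hdom d, ℓ ↑γ τ₀ = w γ * E γ τ₀ := by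
      intro γ τ₀ hτ₀
      set u : (Fin d → ℂ) → ℂ := fun τ => ℓ ↑γ τ / (w γ * E γ τ) with hudef
      have hl := hne ↑γ (hmem γ) _ hbase
      have hu1 : u (baseTau d) = 1 := by
        rw [hudef]
        dsimp only
        rw [hwdef]
        dsimp only
        have hE := hEne γ (baseTau d)
        field_simp
      have hun : ∀ τ ∈ Hdom d, u τ ^ n = 1 := by
        intro τ hτ
        rw [hudef]
        dsimp only
        rw [div_pow, mul_pow, hEpow γ τ hτ, hwpow γ, hχpow ↑γ (hmem γ) τ hτ, pow_one]
        exact div_self (mul_ne_zero (hχ0 γ) (hjne γ τ hτ))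
      have hcu : ContinuousOn u (Hdom d) := by
        refine (hcont ↑γ (hmem γ)).div ?_ ?_
        · exact continuousOn_const.mul
            (((continuousOn_jtilde hd1 (hsu ↑γ γ.2) (hdet ↑γ)).div_const _).cexp)
        · exact fun τ hτ => mul_ne_zero (hw0 γ) (hEne γ τ)
      have hT : ((fun ζ : ℂ => ‖ζ - 1‖) '' {z : ℂ | z ^ n = 1}).Finite :=
        (roots_finite n hn 1).image _
      have hsub : (fun τ => ‖u τ - 1‖) '' Hdom d
          ⊆ (fun ζ : ℂ => ‖ζ - 1‖) '' {z : ℂ | z ^ n = 1} := by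
        rintro x ⟨τ, hτ, rfl⟩
        exact ⟨u τ, hun τ hτ, rfl⟩
      have hmcont : ContinuousOn (fun τ => ‖u τ - 1‖) (Hdom d) :=
        (hcu.sub continuousOn_const).norm
      have hconst := preconnected_finite_subsingleton
        ((preconnected_Hdom hd1).image _ hmcont) hT hsub
      have h0 : ‖u τ₀ - 1‖ = ‖u (baseTau d) - 1‖ :=
        hconst _ (Set.mem_image_of_mem _ hτ₀) _ (Set.mem_image_of_mem _ hbase)
      rw [hu1] at h0
      have hone : u τ₀ = 1 := by
        have h1 : ‖u τ₀ - 1‖ = 0 := by rw [h0]; simp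
        have h2 : u τ₀ - 1 = 0 := norm_eq_zero.mp h1
        exact sub_eq_zero.mp h2
      have hne2 : w γ * E γ τ₀ ≠ 0 := mul_ne_zero (hw0 γ) (hEne γ τ₀)
      rw [hudef] at hone
      dsimp only at hone
      exact (div_eq_one_iff_eq hne2).mp hone
    -- build the rational splitting function
    obtain ⟨f, hf⟩ := exists_qlin
    refine ⟨fun γ => f (-(n * (Complex.log (w γ)).im / (2 * Real.pi))), ?_⟩
    intro γ δ
    have hact : actH d (↑↑δ) (baseTau d) ∈ Hdom d :=
      actH_mem hd1 (hsu ↑δ δ.2) (hdet ↑δ) hbase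
    have hmul' := hmul ↑γ (hmem γ) ↑δ (hmem δ) (baseTau d) hbase
    have hcoe2 : ((↑(γ * δ) : SLC (d+1))) = (↑γ : SLC (d+1)) * ↑δ := rfl
    rw [← hcoe2] at hmul'
    rw [claimA (γ * δ) _ hbase, claimA δ _ hbase, claimA γ _ hact] at hmul'
    have hSig := sig_const' hd1 (hsu ↑γ γ.2) (hdet ↑γ) (hsu ↑δ δ.2) (hdet ↑δ) hbase
    set σ : ℤ := sigmaZ d (↑↑γ) (↑↑δ) with hσdef
    have hw_rel : w (γ * δ) = w γ * w δ
        * Complex.exp ((-(((σ : ℂ)) * (2 * Real.pi * Complex.I))) / n) := by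
      have hEexp : E (γ * δ) (baseTau d) ≠ 0 := hEne _ _
      have h1 : w (γ * δ) = w γ * w δ
          * (E γ (actH d (↑↑δ) (baseTau d)) * E δ (baseTau d) / E (γ * δ) (baseTau d)) := by
        field_simp
        linear_combination hmul'
      have h2 : E γ (actH d (↑↑δ) (baseTau d)) * E δ (baseTau d) / E (γ * δ) (baseTau d)
          = Complex.exp ((-(((σ : ℂ)) * (2 * Real.pi * Complex.I))) / n) := by
        rw [hEdef]
        dsimp only
        rw [← Complex.exp_add, ← Complex.exp_sub]
        congr 1
        have hmm : (↑↑(γ * δ) : Matrix (Fin (d+1)) (Fin (d+1)) ℂ)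
            = (↑↑γ : Matrix (Fin (d+1)) (Fin (d+1)) ℂ) * ↑↑δ := rfl
        rw [hmm]
        linear_combination (-(1 / (n : ℂ))) * hSig
      rw [h1, h2]
    have hexp_rel : Complex.exp (Complex.log (w (γ * δ)))
        = Complex.exp (Complex.log (w γ) + Complex.log (w δ)
          + (-(((σ : ℂ)) * (2 * Real.pi * Complex.I))) / n) := by
      rw [Complex.exp_log (hw0 _), Complex.exp_add, Complex.exp_add,
        Complex.exp_log (hw0 γ), Complex.exp_log (hw0 δ), hw_rel]
    obtain ⟨k, hk⟩ := Complex.exp_eq_exp_iff_exists_int.mp hexp_rel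
    have him := congrArg Complex.im hk
    rw [Complex.add_im, Complex.add_im, Complex.add_im, neg_sigma_div_im,
      intCast_two_pi_I_im] at him
    refine ⟨k, ?_⟩
    have hπ : Real.pi ≠ 0 := Real.pi_ne_zero
    have hnR : (n : ℝ) ≠ 0 := Nat.cast_ne_zero.mpr hn.ne'
    have harg : -((n : ℝ) * (Complex.log (w (γ * δ))).im / (2 * Real.pi))
        = -((n : ℝ) * (Complex.log (w γ)).im / (2 * Real.pi))
          + -((n : ℝ) * (Complex.log (w δ)).im / (2 * Real.pi))
          + (((σ - n * k : ℤ) : ℝ)) := by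
      rw [him]
      push_cast
      field_simp
      ring
    have happ : f (-((n : ℝ) * (Complex.log (w (γ * δ))).im / (2 * Real.pi)))
        = f (-((n : ℝ) * (Complex.log (w γ)).im / (2 * Real.pi)))
          + f (-((n : ℝ) * (Complex.log (w δ)).im / (2 * Real.pi)))
          + ((σ - n * k : ℤ) : ℚ) := by
      rw [harg, map_add, map_add]
      congr 1
      rw [show (((σ - n * k : ℤ)) : ℝ) = ((((σ - n * k : ℤ) : ℚ)) : ℝ) by push_cast; ring,
        hf]
    simp only []
    rw [happ]
    push_cast
    ring
  · -- reverse direction: from the splitting, construct the multiplier system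
    rintro ⟨κ, hκ⟩
    classical
    set K : SLC (d+1) → ℂ := fun s => if h : s ∈ Γ then ((κ ⟨s, h⟩ : ℚ) : ℂ) else 0 with hKdef
    have hKval : ∀ (s : SLC (d+1)) (hs : s ∈ Γ), K s = ((κ ⟨s, hs⟩ : ℚ) : ℂ) := by
      intro s hs
      simp only [hKdef]
      rw [dif_pos hs]
    have hKmul : ∀ (g : SLC (d+1)), g ∈ Γ → ∀ (h : SLC (d+1)), h ∈ Γ → ∃ t : ℤ,
        K (g * h) - K g - K h
          = ((sigmaZ d (↑g) (↑h) : ℤ) : ℂ) - (n : ℂ) * (t : ℂ) := by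
      intro g hg h hh
      obtain ⟨t, ht⟩ := hκ ⟨g, hg⟩ ⟨h, hh⟩
      refine ⟨t, ?_⟩
      rw [hKval _ (mul_mem hg hh), hKval _ hg, hKval _ hh]
      have hsame : κ (⟨g, hg⟩ * ⟨h, hh⟩) = κ ⟨g * h, mul_mem hg hh⟩ := rfl
      rw [hsame] at ht
      have ht' : (κ ⟨g * h, mul_mem hg hh⟩ : ℚ) - κ ⟨g, hg⟩ - κ ⟨h, hh⟩
          = ((sigmaZ d (↑g) (↑h) : ℤ) : ℚ) - (n : ℚ) * (t : ℚ) := by linarith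
      exact_mod_cast congrArg (fun q : ℚ => (q : ℂ)) ht'
    refine ⟨fun s τ => Complex.exp ((jtilde d (↑s) τ - 2 * Real.pi * Complex.I * K s) / n),
      ?_, ?_, ?_, ?_⟩
    · intro g hg τ hτ
      exact Complex.exp_ne_zero _
    · intro g hg h hh τ hτ
      obtain ⟨t, ht⟩ := hKmul g hg h hh
      have hSig := sig_const' hd1 (hsu g hg) (hdet g) (hsu h hh) (hdet h) hτ
      have hcoe : ((g * h : SLC (d+1)) : Matrix (Fin (d+1)) (Fin (d+1)) ℂ)
          = (↑g : Matrix (Fin (d+1)) (Fin (d+1)) ℂ) * (↑h : Matrix (Fin (d+1)) (Fin (d+1)) ℂ) :=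
        rfl
      rw [← Complex.exp_add, Complex.exp_eq_exp_iff_exists_int]
      refine ⟨t, ?_⟩
      rw [hcoe]
      have hinv : (n : ℂ) * ((n : ℂ))⁻¹ = 1 := mul_inv_cancel₀ hn'
      linear_combination (1 / (n : ℂ)) * hSig
        - (2 * (Real.pi : ℂ) * Complex.I / (n : ℂ)) * ht
        + (2 * (Real.pi : ℂ) * Complex.I * (t : ℂ)) * hinv
    · refine ⟨fun s => Complex.exp (-(2 * Real.pi * Complex.I * K s)), ?_, ?_⟩
      · intro g hg h hh
        obtain ⟨t, ht⟩ := hKmul g hg h hh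
        rw [← Complex.exp_add, Complex.exp_eq_exp_iff_exists_int]
        refine ⟨(n : ℤ) * t - sigmaZ d (↑g) (↑h), ?_⟩
        push_cast
        linear_combination (-(2 * (Real.pi : ℂ) * Complex.I)) * ht
      · intro g hg τ hτ
        rw [← Complex.exp_nat_mul, mul_div_cancel₀ _ hn', sub_eq_add_neg, Complex.exp_add,
          exp_jtilde hd1 (hsu g hg) (hdet g) hτ, pow_one]
        ring
    · intro g hg
      refine Complex.continuous_exp.comp_continuousOn ?_
      exact ((continuousOn_jtilde hd1 (hsu g hg) (hdet g)).sub continuousOn_const).div_const _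
end
end
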